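/- Fix c ∈ ℝ. The following functions satisfy the plane extremal equation k''' + (3/2)k·k'' + (1/2)(k')² + (1/2)k²·k' + ε·k' = 0 on the indicated domains: with ε = 1, k(t) = 3√2·tanh(√2(t − c)) on ℝ, and k(t) = 3√2·coth(√2(t − c)) on (c, ∞); with ε = −1, k(t) = −3√2·tan(√2(t − c)) on any open interval where tan(√2(t − c)) is defined, k(t) = 3√2·cot(√2(t − c)) on any open interval where cot(√2(t − c)) is defined, and k(t) = √2 + 3/(t − c) as well as k(t) = −√2 + 3/(t − c) on (c, ∞). -/

import Mathlib

open Filter Topology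

/-- The plane extremal equation
`k''' + (3/2)k·k'' + (1/2)(k')² + (1/2)k²·k' + ε·k' = 0` at a point `t`. -/
def PlaneExtremalEq (ε : ℝ) (k : ℝ → ℝ) (t : ℝ) : Prop :=
  iteratedDeriv 3 k t + (3/2) * k t * iteratedDeriv 2 k t
    + (1/2) * (deriv k t)^2 + (1/2) * (k t)^2 * deriv k t + ε * deriv k t = 0

/-- Any local solution of the Riccati equation `k' = 6(b²+ε) + b·k − k²/3`
satisfies the plane extremal equation. -/
lemma riccati_planeExtremal (ε b : ℝ) (k : ℝ → ℝ) (t : ℝ)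
    (h : ∀ᶠ u in 𝓝 t, HasDerivAt k (6*(b^2+ε) + b * k u - (k u)^2/3) u) :
    PlaneExtremalEq ε k t := by
  set a : ℝ := 6*(b^2+ε) with ha
  have hk1 : deriv k =ᶠ[𝓝 t] fun u => a + b * k u - (k u)^2/3 :=
    h.mono fun u hu => hu.deriv
  have hka : HasDerivAt k (a + b * k t - (k t)^2/3) t := h.self_of_nhds
  -- second derivative
  have h2at : ∀ u, HasDerivAt k (a + b * k u - (k u)^2/3) u →
      HasDerivAt (fun v => a + b * k v - (k v)^2/3)
        ((b - 2 * k u / 3) * (a + b * k u - (k u)^2/3)) u := by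
    intro u hu
    have := ((hu.const_mul b).const_add a).sub (((hu.pow 2).div_const 3))
    refine this.congr_deriv (Eq.symm ?_)
    ring
  have hd2 : HasDerivAt (deriv k)
      ((b - 2 * k t / 3) * (a + b * k t - (k t)^2/3)) t :=
    (h2at t hka).congr_of_eventuallyEq hk1
  -- second deriv eventually
  have hk2 : deriv (deriv k) =ᶠ[𝓝 t]
      fun u => (b - 2 * k u / 3) * (a + b * k u - (k u)^2/3) := by
    filter_upwards [h.eventually_nhds] with u hu
    exact (((h2at u hu.self_of_nhds).congr_of_eventuallyEq
      (hu.mono fun v hv => hv.deriv))).deriv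
  -- third derivative
  have h3 : HasDerivAt (fun v => (b - 2 * k v / 3) * (a + b * k v - (k v)^2/3))
      ((-(2/3) * (a + b * k t - (k t)^2/3) + (b - 2 * k t / 3) *
        ((b - 2 * k t / 3))) * (a + b * k t - (k t)^2/3)) t := by
    have hb : HasDerivAt (fun v => b - 2 * k v / 3)
        (-(2/3) * (a + b * k t - (k t)^2/3)) t := by
      have := ((hka.const_mul 2).div_const 3).const_sub b
      refine this.congr_deriv (Eq.symm ?_); ring
    have := hb.mul (h2at t hka)
    refine this.congr_deriv (Eq.symm ?_)
    ring
  have hd3 : deriv (deriv (deriv k)) t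
      = (-(2/3) * (a + b * k t - (k t)^2/3) + (b - 2 * k t / 3)^2) *
        (a + b * k t - (k t)^2/3) := by
    have := (h3.congr_of_eventuallyEq hk2).deriv
    rw [this]; ring
  have e1 : deriv k t = a + b * k t - (k t)^2/3 := hka.deriv
  have e2 : iteratedDeriv 2 k t = (b - 2 * k t / 3) * (a + b * k t - (k t)^2/3) := by
    rw [iteratedDeriv_succ, iteratedDeriv_one]; exact hd2.deriv
  have e3 : iteratedDeriv 3 k t = (-(2/3) * (a + b * k t - (k t)^2/3) + (b - 2 * k t / 3)^2) *
        (a + b * k t - (k t)^2/3) := by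
    rw [show (3:ℕ) = 2+1 from rfl, iteratedDeriv_succ, iteratedDeriv_succ, iteratedDeriv_one]
    exact hd3
  unfold PlaneExtremalEq
  rw [e1, e2, e3, ha]
  ring

theorem stmt_8 (c : ℝ) :
    (∀ t : ℝ, PlaneExtremalEq 1
      (fun u => 3 * Real.sqrt 2 * Real.tanh (Real.sqrt 2 * (u - c))) t) ∧
    (∀ t : ℝ, c < t → PlaneExtremalEq 1
      (fun u => 3 * Real.sqrt 2 *
        (Real.cosh (Real.sqrt 2 * (u - c)) / Real.sinh (Real.sqrt 2 * (u - c)))) t) ∧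
    (∀ t : ℝ, Real.cos (Real.sqrt 2 * (t - c)) ≠ 0 → PlaneExtremalEq (-1)
      (fun u => -3 * Real.sqrt 2 * Real.tan (Real.sqrt 2 * (u - c))) t) ∧
    (∀ t : ℝ, Real.sin (Real.sqrt 2 * (t - c)) ≠ 0 → PlaneExtremalEq (-1)
      (fun u => 3 * Real.sqrt 2 *
        (Real.cos (Real.sqrt 2 * (u - c)) / Real.sin (Real.sqrt 2 * (u - c)))) t) ∧
    (∀ t : ℝ, c < t → PlaneExtremalEq (-1)
      (fun u => Real.sqrt 2 + 3 / (u - c)) t) ∧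
    (∀ t : ℝ, c < t → PlaneExtremalEq (-1)
      (fun u => -Real.sqrt 2 + 3 / (u - c)) t) := by
  have hr2 : Real.sqrt 2 ^ 2 = 2 := Real.sq_sqrt (by norm_num)
  have hlin : ∀ u : ℝ, HasDerivAt (fun v : ℝ => Real.sqrt 2 * (v - c)) (Real.sqrt 2) u := by
    intro u
    simpa using ((hasDerivAt_id u).sub_const c).const_mul (Real.sqrt 2)
  refine ⟨?_, ?_, ?_, ?_, ?_, ?_⟩
  · -- tanh
    intro t
    apply riccati_planeExtremal 1 0
    filter_upwards with u
    have hcosh : Real.cosh (Real.sqrt 2 * (u - c)) ≠ 0 := (Real.cosh_pos _).ne'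
    have hs : HasDerivAt (fun v => Real.sinh (Real.sqrt 2 * (v - c)))
        (Real.cosh (Real.sqrt 2 * (u - c)) * Real.sqrt 2) u :=
      (Real.hasDerivAt_sinh _).comp u (hlin u)
    have hc : HasDerivAt (fun v => Real.cosh (Real.sqrt 2 * (v - c)))
        (Real.sinh (Real.sqrt 2 * (u - c)) * Real.sqrt 2) u :=
      (Real.hasDerivAt_cosh _).comp u (hlin u)
    have hq := ((hs.div hc hcosh).const_mul (3 * Real.sqrt 2))
    simp only [Real.tanh_eq_sinh_div_cosh]
    refine hq.congr_deriv (Eq.symm ?_)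
    field_simp
    ring_nf
    simp only [hr2]
    ring
  · -- coth
    intro t ht
    apply riccati_planeExtremal 1 0
    filter_upwards [Ioi_mem_nhds ht] with u hu
    have hx : (0:ℝ) < Real.sqrt 2 * (u - c) :=
      mul_pos (Real.sqrt_pos.2 (by norm_num)) (sub_pos.2 hu)
    have hsinh : Real.sinh (Real.sqrt 2 * (u - c)) ≠ 0 := (Real.sinh_pos_iff.2 hx).ne'
    have hs : HasDerivAt (fun v => Real.sinh (Real.sqrt 2 * (v - c)))
        (Real.cosh (Real.sqrt 2 * (u - c)) * Real.sqrt 2) u :=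
      (Real.hasDerivAt_sinh _).comp u (hlin u)
    have hc : HasDerivAt (fun v => Real.cosh (Real.sqrt 2 * (v - c)))
        (Real.sinh (Real.sqrt 2 * (u - c)) * Real.sqrt 2) u :=
      (Real.hasDerivAt_cosh _).comp u (hlin u)
    have hq := ((hc.div hs hsinh).const_mul (3 * Real.sqrt 2))
    refine hq.congr_deriv (Eq.symm ?_)
    field_simp
    ring_nf
    simp only [hr2]
    ring
  · -- tan
    intro t ht
    apply riccati_planeExtremal (-1) 0
    have hcont : ContinuousAt (fun u => Real.cos (Real.sqrt 2 * (u - c))) t := by fun_prop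
    filter_upwards [hcont.eventually_ne ht] with u hu
    have htan : HasDerivAt (fun v => Real.tan (Real.sqrt 2 * (v - c)))
        ((1 / Real.cos (Real.sqrt 2 * (u - c)) ^ 2) * Real.sqrt 2) u :=
      HasDerivAt.comp (h₂ := Real.tan) u (Real.hasDerivAt_tan hu) (hlin u)
    have hq := htan.const_mul (-3 * Real.sqrt 2)
    refine hq.congr_deriv (Eq.symm ?_)
    have hp := Real.sin_sq_add_cos_sq (Real.sqrt 2 * (u - c))
    rw [Real.tan_eq_sin_div_cos]
    field_simp
    linear_combination (-6) * hp +
      (3 - 3 * Real.sin (Real.sqrt 2 * (u - c)) ^ 2) * hr2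
  · -- cot
    intro t ht
    apply riccati_planeExtremal (-1) 0
    have hcont : ContinuousAt (fun u => Real.sin (Real.sqrt 2 * (u - c))) t := by fun_prop
    filter_upwards [hcont.eventually_ne ht] with u hu
    have hs : HasDerivAt (fun v => Real.sin (Real.sqrt 2 * (v - c)))
        (Real.cos (Real.sqrt 2 * (u - c)) * Real.sqrt 2) u :=
      (Real.hasDerivAt_sin _).comp u (hlin u)
    have hc : HasDerivAt (fun v => Real.cos (Real.sqrt 2 * (v - c)))
        (-Real.sin (Real.sqrt 2 * (u - c)) * Real.sqrt 2) u :=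
      (Real.hasDerivAt_cos _).comp u (hlin u)
    have hq := ((hc.div hs hu).const_mul (3 * Real.sqrt 2))
    refine hq.congr_deriv (Eq.symm ?_)
    have hp := Real.sin_sq_add_cos_sq (Real.sqrt 2 * (u - c))
    field_simp
    linear_combination (3 * Real.sin (Real.sqrt 2 * (u - c)) ^ 2) * hr2
  · -- √2 + 3/(t-c)
    intro t ht
    apply riccati_planeExtremal (-1) (2 * Real.sqrt 2 / 3)
    filter_upwards [Ioi_mem_nhds ht] with u hu
    have hne : u - c ≠ 0 := sub_ne_zero.2 (ne_of_gt hu)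
    have hinv : HasDerivAt (fun v : ℝ => Real.sqrt 2 + 3 / (v - c))
        (3 * (-(1 / (u - c) ^ 2))) u := by
      have := (((hasDerivAt_id u).sub_const c).inv hne).const_mul (3:ℝ)
      simpa [div_eq_mul_inv] using this.const_add (Real.sqrt 2)
    refine hinv.congr_deriv (Eq.symm ?_)
    field_simp
    ring_nf
    simp only [hr2]
    ring
  · -- -√2 + 3/(t-c)
    intro t ht
    apply riccati_planeExtremal (-1) (-(2 * Real.sqrt 2 / 3))
    filter_upwards [Ioi_mem_nhds ht] with u hu
    have hne : u - c ≠ 0 := sub_ne_zero.2 (ne_of_gt hu)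
    have hinv : HasDerivAt (fun v : ℝ => -Real.sqrt 2 + 3 / (v - c))
        (3 * (-(1 / (u - c) ^ 2))) u := by
      have := (((hasDerivAt_id u).sub_const c).inv hne).const_mul (3:ℝ)
      simpa [div_eq_mul_inv] using this.const_add (-Real.sqrt 2)
    refine hinv.congr_deriv (Eq.symm ?_)
    field_simp
    ring_nf
    simp only [hr2]
    ring
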